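/- If a metric space (X, δ) carries a uniformly bounded Borel measure, then every ball in X is totally bounded; in particular, if in addition X is complete then X is locally compact (in fact proper). -/

import Mathlib

open Metric Filter Set
open scoped ENNReal

/-- Least number of open balls of radius `r` (arbitrary centres) needed to cover `Ω`;
`⊤` if no finite cover exists. -/
noncomputable def coverNum {X : Type*} [MetricSpace X] (r : ℝ) (Ω : Set X) : ℕ∞ :=
  sInf ((fun s : Finset X => (s.card : ℕ∞)) '' {s | Ω ⊆ ⋃ y ∈ s, Metric.ball y r})

/-- Largest number of pairwise disjoint open balls of radius `r` with centres in `Ω`. -/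
noncomputable def packNum {X : Type*} [MetricSpace X] (r : ℝ) (Ω : Set X) : ℕ∞ :=
  sSup ((fun s : Finset X => (s.card : ℕ∞)) ''
    {s | ↑s ⊆ Ω ∧ (s : Set X).Pairwise fun a b => Disjoint (Metric.ball a r) (Metric.ball b r)})

/-- Logarithm of an extended natural number, valued in `[0,∞]`. -/
noncomputable def elog (n : ℕ∞) : ℝ≥0∞ :=
  if n = ⊤ then ⊤ else ENNReal.ofReal (Real.log n.toNat)

/-- The quantity `log n_r(B(x,R)) / log R`. -/
noncomputable def dimRatio {X : Type*} [MetricSpace X] (x : X) (r R : ℝ) : ℝ≥0∞ :=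
  elog (coverNum r (Metric.ball x R)) / ENNReal.ofReal (Real.log R)

/-- The asymptotic dimension computed at the base point `x`:
`lim_{r→∞} limsup_{R→∞} log n_r(B(x,R)) / log R`; since the inner expression is
nonincreasing in `r`, the limit equals the infimum over `r > 0`. -/
noncomputable def asympDimAt {X : Type*} [MetricSpace X] (x : X) : ℝ≥0∞ :=
  ⨅ (r : ℝ) (_ : 0 < r), Filter.limsup (fun R => dimRatio x r R) Filter.atTop

/-- The asymptotic dimension `d∞(X)` of a nonempty metric space. -/
noncomputable def asympDim (X : Type*) [MetricSpace X] [Nonempty X] : ℝ≥0∞ :=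
  asympDimAt (Classical.arbitrary X)

open MeasureTheory in
/-- A Borel measure `μ` on a metric space is uniformly bounded if for every `r > 0`,
`β₁(r) := inf_x μ(B(x,r)) > 0` and `β₂(r) := sup_x μ(B(x,r)) < ∞`. -/
def UniformlyBoundedMeasure {X : Type*} [MetricSpace X] [MeasurableSpace X]
    (μ : Measure X) : Prop :=
  ∀ r : ℝ, 0 < r →
    (0 < ⨅ x : X, μ (Metric.ball x r)) ∧ (⨆ x : X, μ (Metric.ball x r)) < ⊤

open MeasureTheory in
/-- If a metric space carries a uniformly bounded Borel measure, then every ball is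
totally bounded; in particular, if moreover the space is complete, then it is
locally compact (in fact proper). -/
theorem totallyBounded_ball_of_uniformlyBoundedMeasure
    {X : Type*} [MetricSpace X] [MeasurableSpace X] [BorelSpace X]
    (μ : Measure X) (hμ : UniformlyBoundedMeasure μ) :
    (∀ (x : X) (R : ℝ), TotallyBounded (Metric.ball x R)) ∧
    (CompleteSpace X → LocallyCompactSpace X ∧ ProperSpace X) := by
  have key : ∀ (x : X) (R : ℝ), TotallyBounded (Metric.ball x R) := by
    intro x R
    rcases le_or_gt R 0 with hR | hR
    · rw [Metric.ball_eq_empty.2 hR]; exact totallyBounded_empty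
    by_contra hTB
    rw [Metric.totallyBounded_iff] at hTB
    push_neg at hTB
    obtain ⟨ε, hε, hcov⟩ := hTB
    -- build an ε-separated sequence in the ball
    haveI : Std.Symm fun a b : X => ε ≤ dist a b :=
      ⟨fun a b h => by rwa [dist_comm]⟩
    have hsep : ∀ t : Finset X, (∀ z ∈ t, z ∈ Metric.ball x R) →
        ∃ z, z ∈ Metric.ball x R ∧ ∀ y ∈ t, ε ≤ dist y z := by
      intro t ht
      have := hcov ↑t t.finite_toSet
      rw [Set.not_subset] at this
      obtain ⟨z, hz, hz'⟩ := this
      refine ⟨z, hz, fun y hy => ?_⟩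
      simp only [Set.mem_iUnion, Metric.mem_ball] at hz'
      push_neg at hz'
      rw [dist_comm]
      exact hz' y hy
    obtain ⟨f, hfS, hf⟩ := exists_seq_of_forall_finset_exists'
      (fun z : X => z ∈ Metric.ball x R) (fun a b : X => ε ≤ dist a b) hsep
    -- disjoint small balls
    have hdisj : Pairwise (Function.onFun Disjoint fun n => Metric.ball (f n) (ε / 2)) := by
      intro m n hmn
      apply Metric.ball_disjoint_ball
      have : ε ≤ dist (f m) (f n) := hf hmn
      linarith
    have hsub : (⋃ n, Metric.ball (f n) (ε / 2)) ⊆ Metric.ball x (R + ε / 2) := by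
      refine Set.iUnion_subset fun n z hz => ?_
      have h1 : dist z (f n) < ε / 2 := Metric.mem_ball.1 hz
      have h2 : dist (f n) x < R := Metric.mem_ball.1 (hfS n)
      have := dist_triangle z (f n) x
      exact Metric.mem_ball.2 (by linarith)
    have hβ₁ := (hμ (ε / 2) (by linarith)).1
    have hβ₂ := (hμ (R + ε / 2) (by linarith)).2
    have hmeas : μ (⋃ n, Metric.ball (f n) (ε / 2)) = ∑' n, μ (Metric.ball (f n) (ε / 2)) :=
      measure_iUnion hdisj fun n => measurableSet_ball
    have htop : μ (⋃ n, Metric.ball (f n) (ε / 2)) = ⊤ := by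
      rw [hmeas]
      rw [eq_top_iff]
      calc (⊤ : ℝ≥0∞) = ∑' _ : ℕ, ⨅ y : X, μ (Metric.ball y (ε / 2)) := by
            rw [ENNReal.tsum_const_eq_top_of_ne_zero hβ₁.ne']
        _ ≤ ∑' n, μ (Metric.ball (f n) (ε / 2)) :=
            ENNReal.tsum_le_tsum fun n => iInf_le _ (f n)
    have hx : μ (Metric.ball x (R + ε / 2)) = ⊤ :=
      top_unique (htop ▸ measure_mono hsub)
    have hle : (⊤ : ℝ≥0∞) ≤ ⨆ y : X, μ (Metric.ball y (R + ε / 2)) :=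
      hx ▸ le_iSup (fun y => μ (Metric.ball y (R + ε / 2))) x
    exact absurd (lt_of_le_of_lt hle hβ₂) (by simp)
  refine ⟨key, fun hc => ?_⟩
  have hproper : ProperSpace X := by
    constructor
    intro y r
    exact TotallyBounded.isCompact_of_isClosed
      (TotallyBounded.subset (Metric.closedBall_subset_ball (lt_add_one r)) (key y (r + 1)))
      Metric.isClosed_closedBall
  exact ⟨inferInstance, hproper⟩
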